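/- arXiv:2012.01418 — 4 statements merged into one kernel-verified Lean document; each statement's English description precedes it below -/
import Mathlib

section
/- Let 𝒳 and 𝒲 be finite types, n ∈ ℕ, let μ be an exchangeable probability mass function on Fin n → 𝒳, let ν be a probability mass function on 𝒲, and let F : 𝒳 → 𝒲 → 𝒳. Define the next-state PMF μ' on Fin n → 𝒳 as the law of the profile i ↦ F(x i)(w i), where x is drawn from μ and w : Fin n → 𝒲 has i.i.d. coordinates each drawn from ν, independently of x. Then μ' is exchangeable: μ'(x' ∘ σ) = μ'(x') for every profile x' and every permutation σ of Fin n. -/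
open scoped ENNReal

/-- The i.i.d. product PMF on `Fin n → W` with marginal `ν`. -/
noncomputable def iid {W : Type*} [Fintype W] (n : ℕ) (ν : PMF W) : PMF (Fin n → W) :=
  PMF.ofFintype (fun w => ∏ i, ν (w i)) (by
    have h : ∑ j : W, ν j = 1 := by rw [← ν.tsum_coe, tsum_fintype]
    rw [← Fintype.prod_sum]; simp [h])

/-- If `μ` is exchangeable, then the law of the profile `i ↦ F (x i) (w i)`, where `x ~ μ` and
`w` is an independent i.i.d. noise vector with marginal `ν`, is again exchangeable. -/
theorem stmt2 {X W : Type*} [Fintype X] [Fintype W] {n : ℕ}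
    (μ : PMF (Fin n → X)) (ν : PMF W) (F : X → W → X)
    (hexch : ∀ (x : Fin n → X) (σ : Equiv.Perm (Fin n)), μ (x ∘ σ) = μ x) :
    ∀ (x' : Fin n → X) (σ : Equiv.Perm (Fin n)),
      (μ.bind fun x => (iid n ν).map fun w => fun i => F (x i) (w i)) (x' ∘ σ) =
      (μ.bind fun x => (iid n ν).map fun w => fun i => F (x i) (w i)) x' := by
  intro x' σ
  simp only [PMF.bind_apply]
  rw [← Equiv.tsum_eq (Equiv.arrowCongr σ.symm (Equiv.refl X))]
  refine tsum_congr fun x => ?_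
  have hμ : μ ((Equiv.arrowCongr σ.symm (Equiv.refl X)) x) = μ x := by
    have : (Equiv.arrowCongr σ.symm (Equiv.refl X)) x = x ∘ σ := by
      funext i; simp [Equiv.arrowCongr]
    rw [this, hexch]
  rw [hμ]
  congr 1
  simp only [PMF.map_apply, iid, PMF.ofFintype_apply]
  rw [← Equiv.tsum_eq (Equiv.arrowCongr σ.symm (Equiv.refl W))]
  refine tsum_congr fun w => ?_
  have hw : ∀ i, (Equiv.arrowCongr σ.symm (Equiv.refl W)) w i = w (σ i) := by
    intro i; simp [Equiv.arrowCongr]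
  have hx : ∀ i, (Equiv.arrowCongr σ.symm (Equiv.refl X)) x i = x (σ i) := by
    intro i; simp [Equiv.arrowCongr]
  have hprod : ∏ i, ν ((Equiv.arrowCongr σ.symm (Equiv.refl W)) w i) = ∏ i, ν (w i) := by
    simp only [hw]; exact Equiv.prod_comp σ fun i => ν (w i)
  have hc : (x' ∘ σ = fun i => F ((Equiv.arrowCongr σ.symm (Equiv.refl X)) x i)
      ((Equiv.arrowCongr σ.symm (Equiv.refl W)) w i)) ↔ (x' = fun i => F (x i) (w i)) := by
    simp only [hw, hx]
    constructor <;> intro h <;> funext i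
    · have := congrFun h (σ.symm i); simpa using this
    · exact congrFun h (σ i)
  rw [hprod]
  by_cases h : x' = fun i => F (x i) (w i)
  · rw [if_pos (hc.mpr h), if_pos h]
  · rw [if_neg (fun hh => h (hc.mp hh)), if_neg h]
end

section
/- Let 𝒳 and 𝒲 be finite types, n ∈ ℕ, ν a probability mass function on 𝒲, and F : 𝒳 → 𝒲 → 𝒳. If two profiles x, y : Fin n → 𝒳 satisfy emp(x) = emp(y), then the random empirical count vectors emp(i ↦ F(x i)(W i)) and emp(i ↦ F(y i)(W i)), where W : Fin n → 𝒲 has i.i.d. coordinates each with PMF ν, have the same distribution: for every count vector m' : 𝒳 → ℕ, the ν^n-probability of {w : emp(i ↦ F(x i)(w i)) = m'} equals the ν^n-probability of {w : emp(i ↦ F(y i)(w i)) = m'}. -/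
open scoped ENNReal

/-- The empirical count vector of a profile `x : Fin n → X`. -/
def emp {X : Type*} [DecidableEq X] {n : ℕ} (x : Fin n → X) : X → ℕ :=
  fun a => (Finset.univ.filter (fun i => x i = a)).card

lemma emp_eq_sum {X : Type*} [DecidableEq X] {n : ℕ} (x : Fin n → X) (a : X) :
    emp x a = ∑ i, if x i = a then 1 else 0 := by
  rw [emp, Finset.card_filter]

lemma exists_perm_of_counts {X : Type*} [DecidableEq X] : ∀ {n : ℕ} (x y : Fin n → X),
    (∀ a, (∑ i, if x i = a then 1 else 0) = (∑ i, if y i = a then (1:ℕ) else 0)) →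
    ∃ σ : Equiv.Perm (Fin n), ∀ i, x (σ i) = y i := by
  intro n
  induction n with
  | zero => exact fun x y _ => ⟨1, fun i => i.elim0⟩
  | succ n ih =>
    intro x y h
    have h0 := h (y 0)
    have hpos : (∑ i, if x i = y 0 then (1:ℕ) else 0) ≠ 0 := by
      rw [h0]
      intro hc
      have := Finset.sum_eq_zero_iff.mp hc 0 (Finset.mem_univ 0)
      simp at this
    obtain ⟨j, _, hj⟩ := Finset.exists_ne_zero_of_sum_ne_zero hpos
    have hxj : x j = y 0 := by by_contra hne; simp [hne] at hj
    set τ := Equiv.swap j 0 with hτ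
    set x' : Fin (n+1) → X := fun i => x (τ i) with hx'
    have hx'0 : x' 0 = y 0 := by simp [hx', hτ, hxj]
    have hcx' : ∀ a, (∑ i, if x' i = a then (1:ℕ) else 0)
        = ∑ i, if x i = a then 1 else 0 := fun a =>
      Equiv.sum_comp τ (fun i => if x i = a then (1:ℕ) else 0)
    have htail : ∀ a, (∑ i : Fin n, if x' i.succ = a then (1:ℕ) else 0)
        = ∑ i : Fin n, if y i.succ = a then 1 else 0 := by
      intro a
      have := (hcx' a).trans (h a)
      rw [Fin.sum_univ_succ, Fin.sum_univ_succ, hx'0] at this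
      exact Nat.add_left_cancel this
    obtain ⟨σ'', hσ''⟩ := ih (fun i => x' i.succ) (fun i => y i.succ) htail
    refine ⟨(Equiv.Perm.decomposeFin.symm (0, σ'')).trans τ, ?_⟩
    intro i
    induction i using Fin.cases with
    | zero => simpa using hx'0
    | succ k => simpa [Equiv.Perm.decomposeFin_symm_apply_succ] using hσ'' k

lemma emp_comp_perm {X : Type*} [DecidableEq X] {n : ℕ} (f : Fin n → X)
    (σ : Equiv.Perm (Fin n)) : emp (fun i => f (σ i)) = emp f := by
  funext a
  rw [emp_eq_sum, emp_eq_sum]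
  exact Equiv.sum_comp σ (fun i => if f i = a then (1:ℕ) else 0)

/-- If `emp x = emp y`, then the random empirical count vectors of `i ↦ F (x i) (W i)` and
`i ↦ F (y i) (W i)` (with `W` i.i.d. with marginal `ν`) have the same distribution. -/
theorem stmt3 {X W : Type*} [Fintype X] [DecidableEq X] [Fintype W] {n : ℕ}
    (ν : PMF W) (F : X → W → X) (x y : Fin n → X) (hxy : emp x = emp y) :
    ∀ m' : X → ℕ,
      (∑ w ∈ Finset.univ.filter (fun w : Fin n → W => emp (fun i => F (x i) (w i)) = m'),
        iid n ν w) =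
      (∑ w ∈ Finset.univ.filter (fun w : Fin n → W => emp (fun i => F (y i) (w i)) = m'),
        iid n ν w) := by
  intro m'
  obtain ⟨σ, hσ⟩ : ∃ σ : Equiv.Perm (Fin n), ∀ i, x (σ i) = y i := by
    apply exists_perm_of_counts
    intro a
    rw [← emp_eq_sum, ← emp_eq_sum, hxy]
  rw [Finset.sum_filter, Finset.sum_filter]
  refine Fintype.sum_equiv (Equiv.arrowCongr σ.symm (Equiv.refl W))
    _ _ (fun w => ?_)
  have he : ∀ i, (Equiv.arrowCongr σ.symm (Equiv.refl W)) w i = w (σ i) := by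
    intro i; simp [Equiv.arrowCongr]
  have hcond : emp (fun i => F (y i) ((Equiv.arrowCongr σ.symm (Equiv.refl W)) w i))
      = emp (fun i => F (x i) (w i)) := by
    have : (fun i => F (y i) ((Equiv.arrowCongr σ.symm (Equiv.refl W)) w i))
        = fun i => (fun j => F (x j) (w j)) (σ i) := by
      funext i; rw [he i, ← hσ i]
    rw [this]; exact emp_comp_perm (fun j => F (x j) (w j)) σ
  have hiid : iid n ν ((Equiv.arrowCongr σ.symm (Equiv.refl W)) w) = iid n ν w := by
    simp only [iid, PMF.ofFintype_apply]
    calc (∏ i, ν ((Equiv.arrowCongr σ.symm (Equiv.refl W)) w i))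
        = ∏ i, ν (w (σ i)) := by simp_rw [he]
      _ = ∏ i, ν (w i) := Equiv.prod_comp σ (fun i => ν (w i))
  rw [hcond, hiid]
end

section
/- (Lemma 3 of the paper.) In the closed-loop coordinated system, for every coordination strategy ψ, every time t, every per-step cost function ℓ_t : (Fin n → 𝒳) × (Fin n → 𝒰) → ℝ, and every mean-field history z_{1:t} with positive probability, the conditional expectation of the per-step cost satisfies E[ℓ_t(X_t, (Γ_t(X_t^1),…,Γ_t(X_t^n))) | Z_{1:t} = z_{1:t}] = ℓ̂_t(z_t, γ_t), where γ_t = ψ_t(z_{1:t}) and ℓ̂_t(m, γ) := (1/|H(m)|) ∑_{x ∈ H(m)} ℓ_t(x, (γ(x^1),…,γ(x^n))). In particular this conditional expectation depends only on (z_t, γ_t) and not on the strategy ψ or on z_{1:t-1}. -/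
open scoped ENNReal

def Hset {X : Type*} [Fintype X] [DecidableEq X] (n : ℕ) (m : X → ℕ) : Finset (Fin n → X) :=
  Finset.univ.filter (fun x => emp x = m)

variable {X U W : Type*} [Fintype X] [DecidableEq X] [Fintype U] [Fintype W]

/-- The closed-loop law of the state trajectory `(X_0, …, X_t)` in the coordinated system:
initial states i.i.d. `PX`; the coordinator applies the prescription `ψ t z_{0:t} : X → U`
to each local state; local dynamics `f` driven by i.i.d. noises `PW t`. -/
noncomputable def hist (n : ℕ) (PX : PMF X) (PW : ℕ → PMF W)
    (f : ℕ → X → U → W → (X → ℕ) → X)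
    (ψ : (t : ℕ) → (Fin (t + 1) → (X → ℕ)) → X → U) :
    (t : ℕ) → PMF (Fin (t + 1) → (Fin n → X))
  | 0 => (iid n PX).map (fun x _ => x)
  | t + 1 =>
    (hist n PX PW f ψ t).bind (fun xs =>
      (iid n (PW t)).map (fun w =>
        Fin.snoc xs (fun i =>
          f t (xs (Fin.last t) i)
            (ψ t (fun s => emp (xs s)) (xs (Fin.last t) i))
            (w i) (emp (xs (Fin.last t))))))

/-! ### Auxiliary lemmas -/

lemma emp_comp {X : Type*} [DecidableEq X] {n : ℕ} (x : Fin n → X) (σ : Equiv.Perm (Fin n)) :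
    emp (x ∘ σ) = emp x := by
  funext a
  exact Finset.card_equiv σ (by intro i; simp [Function.comp])

lemma exists_comp_perm {X : Type*} [DecidableEq X] {n : ℕ} {x x' : Fin n → X}
    (h : emp x = emp x') : ∃ σ : Equiv.Perm (Fin n), x ∘ σ = x' := by
  have hcard : ∀ a, Fintype.card {i // x' i = a} = Fintype.card {i // x i = a} := by
    intro a
    simp only [Fintype.card_subtype]
    exact (congrFun h a).symm
  let e : ∀ a, {i // x' i = a} ≃ {i // x i = a} := fun a => Fintype.equivOfCardEq (hcard a)
  refine ⟨((Equiv.sigmaFiberEquiv x').symm.trans (Equiv.sigmaCongrRight e)).trans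
    (Equiv.sigmaFiberEquiv x), funext fun i => ?_⟩
  simp only [Function.comp_apply, Equiv.trans_apply, Equiv.sigmaFiberEquiv,
    Equiv.sigmaCongrRight, Equiv.coe_fn_mk, Equiv.coe_fn_symm_mk]
  exact (e (x' i) ⟨i, rfl⟩).prop

lemma iid_comp {W : Type*} [Fintype W] {n : ℕ} (ν : PMF W) (σ : Equiv.Perm (Fin n))
    (w : Fin n → W) : iid n ν (w ∘ σ) = iid n ν w := by
  simp only [iid, PMF.ofFintype_apply, Function.comp]
  exact Equiv.prod_comp σ (fun i => ν (w i))

lemma comp_perm_inj {α : Type*} {n : ℕ} (σ : Equiv.Perm (Fin n)) {y y' : Fin n → α}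
    (h : y ∘ σ = y' ∘ σ) : y = y' := by
  funext i
  have := congrFun h (σ.symm i)
  simpa using this

lemma ite_iff_congr {α : Type*} {c d : Prop} {h1 : Decidable c} {h2 : Decidable d}
    {a b : α} (hcd : c ↔ d) : (@ite _ c h1 a b) = (@ite _ d h2 a b) := by
  by_cases hc : c
  · rw [if_pos hc, if_pos (hcd.mp hc)]
  · rw [if_neg hc, if_neg (fun hd => hc (hcd.mpr hd))]

set_option linter.unusedSectionVars false in
/-- Exchangeability of the closed-loop trajectory law: simultaneously permuting the agents
at every time step leaves the probability of a trajectory unchanged. -/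
lemma hist_perm (n : ℕ) (PX : PMF X) (PW : ℕ → PMF W)
    (f : ℕ → X → U → W → (X → ℕ) → X)
    (ψ : (t : ℕ) → (Fin (t + 1) → (X → ℕ)) → X → U)
    (σ : Equiv.Perm (Fin n)) :
    ∀ (t : ℕ) (ys : Fin (t + 1) → (Fin n → X)),
      hist n PX PW f ψ t (fun s => ys s ∘ σ) = hist n PX PW f ψ t ys := by
  intro t
  induction t with
  | zero =>
    intro ys
    simp only [hist, PMF.map_apply]
    refine ((Equiv.tsum_eq (Equiv.piCongrLeft' (fun _ : Fin n => X) σ.symm) _).symm.trans ?_)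
    refine tsum_congr fun x => ?_
    have hE : (Equiv.piCongrLeft' (fun _ : Fin n => X) σ.symm) x = x ∘ σ := rfl
    rw [hE]
    rw [iid_comp PX σ x]
    apply ite_iff_congr
    constructor
    · intro h
      funext s i
      have := congrFun (congrFun h s) (σ.symm i)
      simpa using this
    · intro h; subst h; rfl
  | succ t ih =>
    intro ys
    simp only [hist, PMF.bind_apply]
    refine ((Equiv.tsum_eq
      (Equiv.piCongrRight (fun _ : Fin (t+1) => Equiv.piCongrLeft' (fun _ : Fin n => X) σ.symm))
      _).symm.trans ?_)
    refine tsum_congr fun a => ?_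
    have hE : (Equiv.piCongrRight
        (fun _ : Fin (t+1) => Equiv.piCongrLeft' (fun _ : Fin n => X) σ.symm)) a
        = fun s => a s ∘ σ := rfl
    rw [hE, ih a]
    congr 1
    simp only [PMF.map_apply]
    have key : ∀ w : Fin n → W,
        (Fin.snoc (fun s => a s ∘ σ) (fun i =>
          f t ((fun s => a s ∘ σ) (Fin.last t) i)
            (ψ t (fun s => emp ((fun s => a s ∘ σ) s)) ((fun s => a s ∘ σ) (Fin.last t) i))
            ((w ∘ σ) i) (emp ((fun s => a s ∘ σ) (Fin.last t))))
          : Fin (t+2) → Fin n → X)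
        = fun s => (Fin.snoc a (fun j =>
            f t (a (Fin.last t) j)
              (ψ t (fun s => emp (a s)) (a (Fin.last t) j))
              (w j) (emp (a (Fin.last t)))) : Fin (t+2) → Fin n → X) s ∘ σ := by
      intro w
      funext s
      refine Fin.lastCases ?_ (fun r => ?_) s
      · simp only [Fin.snoc_last]
        funext i
        simp [emp_comp]
      · simp [Fin.snoc_castSucc]
    refine ((Equiv.tsum_eq (Equiv.piCongrLeft' (fun _ : Fin n => W) σ.symm) _).symm.trans ?_)
    refine tsum_congr fun w => ?_
    have hEw : (Equiv.piCongrLeft' (fun _ : Fin n => W) σ.symm) w = w ∘ σ := rfl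
    rw [hEw]
    rw [iid_comp (PW t) σ w]
    apply ite_iff_congr
    beta_reduce at key
    constructor
    · intro h
      funext s
      exact comp_perm_inj σ (congrFun (h.trans (key w)) s)
    · intro h
      subst h
      exact (key w).symm

/-- Lemma 3: under any coordination strategy, the conditional expectation of the per-step cost
given a positive-probability mean-field history `z_{0:t}` equals
`ℓ̂_t(z_t, γ_t) = (1/|H(z_t)|) ∑_{x ∈ H(z_t)} ℓ_t(x, (γ_t(x^1),…,γ_t(x^n)))` with
`γ_t = ψ t z`; it depends only on `(z_t, γ_t)`, not on the earlier history or the strategy. -/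
theorem stmt5 (n : ℕ) (hn : 1 ≤ n) (PX : PMF X) (PW : ℕ → PMF W)
    (f : ℕ → X → U → W → (X → ℕ) → X)
    (ψ : (t : ℕ) → (Fin (t + 1) → (X → ℕ)) → X → U)
    (t : ℕ) (ℓ : (Fin n → X) → (Fin n → U) → ℝ)
    (z : Fin (t + 1) → (X → ℕ))
    (hz : 0 < ∑ xs ∈ Finset.univ.filter
        (fun xs : Fin (t + 1) → (Fin n → X) => ∀ s, emp (xs s) = z s),
        hist n PX PW f ψ t xs) :
    (∑ xs ∈ Finset.univ.filter
        (fun xs : Fin (t + 1) → (Fin n → X) => ∀ s, emp (xs s) = z s),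
        (hist n PX PW f ψ t xs).toReal *
          ℓ (xs (Fin.last t))
            (fun i => ψ t (fun s => emp (xs s)) (xs (Fin.last t) i)))
      / (∑ xs ∈ Finset.univ.filter
          (fun xs : Fin (t + 1) → (Fin n → X) => ∀ s, emp (xs s) = z s),
          (hist n PX PW f ψ t xs).toReal)
    = (∑ x ∈ Hset n (z (Fin.last t)), ℓ x (fun i => ψ t z (x i)))
        / ((Hset n (z (Fin.last t))).card : ℝ) := by
  classical
  set P := hist n PX PW f ψ t with hP
  set F : Finset (Fin (t+1) → Fin n → X) := Finset.univ.filter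
      (fun xs : Fin (t + 1) → (Fin n → X) => ∀ s, emp (xs s) = z s) with hF
  set H := Hset n (z (Fin.last t)) with hH
  have hmemF : ∀ xs : Fin (t+1) → Fin n → X, xs ∈ F ↔ ∀ s, emp (xs s) = z s := by
    intro xs; simp [hF]
  have hmaps : ∀ xs ∈ F, xs (Fin.last t) ∈ H := by
    intro xs hxs
    simp only [hH, Hset, Finset.mem_filter, Finset.mem_univ, true_and]
    exact (hmemF xs).1 hxs (Fin.last t)
  obtain ⟨xs₀, hxs₀F, hxs₀⟩ := Finset.exists_ne_zero_of_sum_ne_zero hz.ne'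
  set x₀ := xs₀ (Fin.last t) with hx₀
  have hx₀H : x₀ ∈ H := hmaps xs₀ hxs₀F
  set S : (Fin n → X) → ℝ := fun x =>
    ∑ xs ∈ F.filter (fun xs => xs (Fin.last t) = x), (P xs).toReal with hS
  -- S is constant on H
  have hSconst : ∀ x ∈ H, S x = S x₀ := by
    intro x hx
    have h1 : emp x = z (Fin.last t) := by
      simpa [hH, Hset] using hx
    have h2 : emp x₀ = z (Fin.last t) := by
      simpa [hH, Hset] using hx₀H
    obtain ⟨σ, hσ⟩ := exists_comp_perm (h1.trans h2.symm)
    refine Finset.sum_nbij' (fun xs => fun s => xs s ∘ σ) (fun xs => fun s => xs s ∘ σ.symm)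
      ?_ ?_ ?_ ?_ ?_
    · intro xs hxs
      simp only [Finset.mem_filter] at hxs ⊢
      obtain ⟨hxsF, hlast⟩ := hxs
      refine ⟨(hmemF _).2 fun s => ?_, ?_⟩
      · rw [emp_comp]; exact (hmemF xs).1 hxsF s
      · rw [hlast]; exact hσ
    · intro xs hxs
      simp only [Finset.mem_filter] at hxs ⊢
      obtain ⟨hxsF, hlast⟩ := hxs
      refine ⟨(hmemF _).2 fun s => ?_, ?_⟩
      · rw [emp_comp]; exact (hmemF xs).1 hxsF s
      · rw [hlast, ← hσ]
        funext i; simp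
    · intro xs _; funext s i; simp
    · intro xs _; funext s i; simp
    · intro xs _
      rw [hP, hist_perm n PX PW f ψ σ t xs]
  -- S x₀ is positive
  have hS0pos : 0 < S x₀ := by
    refine Finset.sum_pos' (fun xs _ => ENNReal.toReal_nonneg) ⟨xs₀, ?_, ?_⟩
    · exact Finset.mem_filter.2 ⟨hxs₀F, rfl⟩
    · exact ENNReal.toReal_pos hxs₀ (PMF.apply_ne_top _ _)
  -- numerator
  have hnum : (∑ xs ∈ F, (P xs).toReal *
        ℓ (xs (Fin.last t)) (fun i => ψ t (fun s => emp (xs s)) (xs (Fin.last t) i)))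
      = S x₀ * ∑ x ∈ H, ℓ x (fun i => ψ t z (x i)) := by
    rw [← Finset.sum_fiberwise_of_maps_to hmaps (fun xs => (P xs).toReal *
        ℓ (xs (Fin.last t)) (fun i => ψ t (fun s => emp (xs s)) (xs (Fin.last t) i))),
      Finset.mul_sum]
    refine Finset.sum_congr rfl fun x hx => ?_
    rw [← hSconst x hx, hS, Finset.sum_mul]
    refine Finset.sum_congr rfl fun xs hxs => ?_
    obtain ⟨hxsF, hlast⟩ := Finset.mem_filter.1 hxs
    have hzz : (fun s => emp (xs s)) = z := funext ((hmemF xs).1 hxsF)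
    rw [hlast, hzz]
  -- denominator
  have hden : (∑ xs ∈ F, (P xs).toReal) = S x₀ * (H.card : ℝ) := by
    rw [← Finset.sum_fiberwise_of_maps_to hmaps (fun xs => (P xs).toReal)]
    rw [Finset.sum_congr rfl hSconst, Finset.sum_const, nsmul_eq_mul, mul_comm]
  rw [hnum, hden]
  exact mul_div_mul_left _ _ hS0pos.ne'
end

section
/- (Example of Section I-D: symmetric strategies are strictly suboptimal.) Let n ≥ 2 and let X^1,…,X^n be i.i.d. random variables, each uniform on Fin n. For ANY function g : (Fin n → ℕ) → Fin n → Fin n, define U^i := g(emp(X))(X^i), where emp(X)(a) = |{i : X^i = a}|. Then the probability that the map i ↦ U^i is injective (equivalently, that the empirical count vector of U is identically 1) is at most 1 − n^{1−n}, and in particular strictly less than 1. By contrast, the asymmetric choice U^i := i makes the map i ↦ U^i injective with probability 1. Hence, for the cost K·1(emp(U) ≠ (1,…,1)) with K > 0, every symmetric strategy incurs expected cost at least K·n^{1−n} > 0 while an asymmetric strategy incurs cost 0. -/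
open scoped ENNReal

/-- The law of `n` i.i.d. coordinates, each uniform on `Fin n`. -/
noncomputable def unifProfile (n : ℕ) (hn : 0 < n) : PMF (Fin n → Fin n) :=
  haveI : NeZero n := ⟨hn.ne'⟩
  iid n (PMF.uniformOfFintype (Fin n))

lemma unif_apply (n : ℕ) (hn : 0 < n) (x : Fin n → Fin n) :
    unifProfile n hn x = ((n : ℝ≥0∞) ^ n)⁻¹ := by
  haveI : NeZero n := ⟨hn.ne'⟩
  simp [unifProfile, iid, PMF.ofFintype_apply, PMF.uniformOfFintype_apply,
    Finset.prod_const, ENNReal.inv_pow]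

/-- For i.i.d. uniform local states and ANY symmetric strategy `g` (each controller applies the
same function of the mean field and its local state), the probability that the resulting action
profile is injective is at most `1 - n^{1-n} < 1`; the asymmetric choice `U^i = i` is injective
(with probability one), and for the cost `K·1(emp U ≠ (1,…,1))` every symmetric strategy incurs
expected cost at least `K·n^{1-n} > 0`, while the asymmetric strategy incurs cost `0`. -/
theorem stmt14 (n : ℕ) (hn : 2 ≤ n) (g : (Fin n → ℕ) → Fin n → Fin n) (K : ℝ) (hK : 0 < K) :
    (∑ x ∈ Finset.univ.filter
        (fun x : Fin n → Fin n => Function.Injective (fun i => g (emp x) (x i))),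
        unifProfile n (by omega) x) ≤ 1 - ((n : ℝ≥0∞) ^ (n - 1))⁻¹ ∧
    (∑ x ∈ Finset.univ.filter
        (fun x : Fin n → Fin n => Function.Injective (fun i => g (emp x) (x i))),
        unifProfile n (by omega) x) < 1 ∧
    Function.Injective (fun i : Fin n => i) ∧
    (emp (fun i : Fin n => i)) = (fun _ => 1) ∧
    K * ((n : ℝ) ^ (n - 1))⁻¹ ≤
      ∑ x : Fin n → Fin n, (unifProfile n (by omega) x).toReal *
        (if emp (fun i => g (emp x) (x i)) = (fun _ => 1) then 0 else K) ∧
    0 < K * ((n : ℝ) ^ (n - 1))⁻¹ := by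
  have hn0 : 0 < n := by omega
  have hnE : (n : ℝ≥0∞) ≠ 0 := by exact_mod_cast hn0.ne'
  have hnT : (n : ℝ≥0∞) ≠ ⊤ := ENNReal.natCast_ne_top n
  -- constant profiles
  set C : Finset (Fin n → Fin n) :=
    Finset.univ.image (fun c : Fin n => (fun _ => c : Fin n → Fin n)) with hC
  have hconstinj : Function.Injective (fun c : Fin n => (fun _ => c : Fin n → Fin n)) := by
    intro a b h; exact congrFun h ⟨0, hn0⟩
  have hCcard : C.card = n := by
    rw [hC, Finset.card_image_of_injective _ hconstinj, Finset.card_univ, Fintype.card_fin]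
  -- constant profiles produce constant (non-injective) actions
  have hnotinj : ∀ c : Fin n, ¬ Function.Injective
      (fun i : Fin n => g (emp (fun _ : Fin n => c)) ((fun _ : Fin n => c) i)) := by
    intro c h
    have := h (a₁ := ⟨0, hn0⟩) (a₂ := ⟨1, by omega⟩) rfl
    simp [Fin.ext_iff] at this
  -- key power identity in ℝ≥0∞
  have hpow : (n : ℝ≥0∞) ^ n = (n : ℝ≥0∞) ^ (n - 1) * n := by
    rw [← pow_succ]; congr 1; omega
  have hsumC : ∑ x ∈ C, unifProfile n hn0 x = ((n : ℝ≥0∞) ^ (n - 1))⁻¹ := by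
    rw [hC, Finset.sum_image (fun a _ b _ h => hconstinj h)]
    simp only [unif_apply n hn0, Finset.sum_const, Finset.card_univ, Fintype.card_fin,
      nsmul_eq_mul]
    rw [hpow, ENNReal.mul_inv (Or.inl (pow_ne_zero _ hnE)) (Or.inl (ENNReal.pow_ne_top hnT))]
    rw [← mul_assoc, mul_comm (n : ℝ≥0∞), mul_assoc, ENNReal.mul_inv_cancel hnE hnT, mul_one]
  have htotal : ∑ x : Fin n → Fin n, unifProfile n hn0 x = 1 := by
    have := (unifProfile n hn0).tsum_coe
    rwa [tsum_fintype] at this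
  set S := Finset.univ.filter
    (fun x : Fin n → Fin n => Function.Injective (fun i => g (emp x) (x i))) with hS
  have hdisj : Disjoint S C := by
    rw [Finset.disjoint_left]
    intro x hx hxC
    rw [hC, Finset.mem_image] at hxC
    obtain ⟨c, _, rfl⟩ := hxC
    rw [hS, Finset.mem_filter] at hx
    exact hnotinj c hx.2
  have hadd : (∑ x ∈ S, unifProfile n hn0 x) + ∑ x ∈ C, unifProfile n hn0 x ≤ 1 := by
    rw [← Finset.sum_union hdisj, ← htotal]
    exact Finset.sum_le_sum_of_subset (Finset.subset_univ _)
  have hCne : ((n : ℝ≥0∞) ^ (n - 1))⁻¹ ≠ ⊤ := by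
    simp [ENNReal.inv_ne_top, pow_ne_zero, hnE]
  have h1 : (∑ x ∈ S, unifProfile n hn0 x) ≤ 1 - ((n : ℝ≥0∞) ^ (n - 1))⁻¹ :=
    ENNReal.le_sub_of_add_le_right hCne (by rwa [hsumC] at hadd)
  refine ⟨h1, ?_, fun _ _ h => h, ?_, ?_, ?_⟩
  · refine lt_of_le_of_lt h1 ?_
    apply ENNReal.sub_lt_self ENNReal.one_ne_top one_ne_zero
    simp [ENNReal.pow_ne_top hnT]
  · funext a
    simp [emp, Finset.filter_eq']
  · -- real expected-cost bound
    have hterm : ∀ c : Fin n,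
        (unifProfile n hn0 (fun _ => c)).toReal *
          (if emp (fun i => g (emp (fun _ : Fin n => c)) ((fun _ : Fin n => c) i)) =
              (fun _ => 1) then 0 else K) = ((n : ℝ) ^ n)⁻¹ * K := by
      intro c
      rw [if_neg, unif_apply n hn0]
      · simp [ENNReal.toReal_inv]
      · intro h
        set u := g (emp (fun _ : Fin n => c)) c with hu
        have := congrFun h u
        simp [emp] at this
        rw [if_pos hu.symm, Finset.card_univ, Fintype.card_fin] at this
        omega
    have hsub : ∑ x ∈ C, (unifProfile n hn0 x).toReal *
        (if emp (fun i => g (emp x) (x i)) = (fun _ => 1) then 0 else K)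
        = K * ((n : ℝ) ^ (n - 1))⁻¹ := by
      rw [hC, Finset.sum_image (fun a _ b _ h => hconstinj h)]
      simp only [hterm, Finset.sum_const, Finset.card_univ, Fintype.card_fin, nsmul_eq_mul]
      have hpR : (n : ℝ) ^ n = (n : ℝ) ^ (n - 1) * n := by
        rw [← pow_succ]; congr 1; omega
      have hnR : (0:ℝ) < n := by exact_mod_cast hn0
      field_simp [hpR]
      rw [hpR]; ring
    rw [← hsub]
    apply Finset.sum_le_sum_of_subset_of_nonneg (Finset.subset_univ _)
    intro x _ _
    have : (0:ℝ) ≤ if emp (fun i => g (emp x) (x i)) = (fun _ => 1) then 0 else K := by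
      split <;> [rfl; exact hK.le]
    positivity
  · have hnR : (0:ℝ) < n := by exact_mod_cast hn0
    positivity
end
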